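/- Let X be a compact Hausdorff space, ∗ a continuous t-norm, and I : C(X,[0,1]) → [0,1] a functional that is normed (I(1_X) = 1), ∗-homogeneous (I(c ∗ φ) = c ∗ I(φ)), and comonotonically maxitive (I(φ ∨ ψ) = I(φ) ∨ I(ψ) for comonotone φ, ψ). Then I is monotone: ψ ≤ φ pointwise implies I(ψ) ≤ I(φ). -/

import Mathlib

open unitInterval

noncomputable section

/-- Two `[0,1]`-valued functions are comonotone. -/
def Comonotone {X : Type*} (f g : X → I) : Prop :=
  ∀ x y : X, 0 ≤ ((f x : ℝ) - (f y : ℝ)) * ((g x : ℝ) - (g y : ℝ))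
/-- Pointwise max of a constant with a continuous `[0,1]`-valued map. -/
def cSup {X : Type*} [TopologicalSpace X] (c : I) (f : C(X, I)) : C(X, I) :=
  ⟨fun x => c ⊔ f x, continuous_const.max f.continuous⟩

/-- Pointwise min of a constant with a continuous `[0,1]`-valued map. -/
def cInf {X : Type*} [TopologicalSpace X] (c : I) (f : C(X, I)) : C(X, I) :=
  ⟨fun x => c ⊓ f x, continuous_const.min f.continuous⟩

/-- Pointwise product of a constant with a continuous `[0,1]`-valued map. -/
def cMul {X : Type*} [TopologicalSpace X] (c : I) (f : C(X, I)) : C(X, I) :=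
  ⟨fun x => c * f x,
    Continuous.subtype_mk (continuous_const.mul (continuous_subtype_val.comp f.continuous)) _⟩

/-- Pointwise max of two continuous `[0,1]`-valued maps. -/
def fSup {X : Type*} [TopologicalSpace X] (f g : C(X, I)) : C(X, I) :=
  ⟨fun x => f x ⊔ g x, f.continuous.max g.continuous⟩
/-- A continuous t-norm on `[0,1]`. -/
structure Tnorm where
  op : I → I → I
  cont : Continuous fun p : I × I => op p.1 p.2
  assoc : ∀ a b c, op (op a b) c = op a (op b c)
  comm : ∀ a b, op a b = op b a
  mono : ∀ ⦃a b c d⦄, a ≤ b → c ≤ d → op a c ≤ op b d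
  op_one : ∀ s, op s 1 = s
/-- The map `x ↦ c ∗ f x` for a t-norm `∗`. -/
def tMul {X : Type*} [TopologicalSpace X] (T : Tnorm) (c : I) (f : C(X, I)) : C(X, I) :=
  ⟨fun x => T.op c (f x), T.cont.comp (continuous_const.prodMk f.continuous)⟩

/-! ### Auxiliary material -/

/-- A piecewise-linear "steep Urysohn on values" map `[0,1] → [0,1]`:
`0` for `s ≤ p`, `1` for `s ≥ q`, linear in between. -/
def stp (p q : ℝ) (s : I) : I :=
  Set.projIcc 0 1 zero_le_one (((s : ℝ) - p) / (q - p))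

lemma coe_stp (p q : ℝ) (s : I) :
    (stp p q s : ℝ) = max 0 (min 1 (((s : ℝ) - p) / (q - p))) := by
  rw [stp, Set.coe_projIcc]

lemma stp_cont (p q : ℝ) : Continuous (stp p q) :=
  continuous_projIcc.comp ((continuous_subtype_val.sub continuous_const).div_const _)

lemma stp_mono {p q : ℝ} (h : p < q) : Monotone (stp p q) := by
  intro a b hab
  apply Set.monotone_projIcc
  have h' : (a : ℝ) ≤ b := Subtype.coe_le_coe.2 hab
  gcongr <;> linarith

lemma stp_eq_one {p q : ℝ} (h : p < q) {s : I} (hs : q ≤ (s : ℝ)) : stp p q s = 1 := by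
  apply Subtype.ext
  rw [coe_stp]
  have h1 : (1 : ℝ) ≤ ((s : ℝ) - p) / (q - p) :=
    (one_le_div (sub_pos.2 h)).2 (by linarith)
  rw [min_eq_left h1, max_eq_right zero_le_one]
  norm_num

lemma stp_eq_zero {p q : ℝ} (h : p < q) {s : I} (hs : (s : ℝ) ≤ p) : stp p q s = 0 := by
  apply Subtype.ext
  rw [coe_stp]
  have h1 : ((s : ℝ) - p) / (q - p) ≤ 0 :=
    div_nonpos_of_nonpos_of_nonneg (by linarith) (by linarith)
  rw [max_eq_left ((min_le_right _ _).trans h1)]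
  norm_num

lemma stp_pos {p q : ℝ} (h : p < q) {s : I} (hpos : 0 < (stp p q s : ℝ)) : p < (s : ℝ) := by
  by_contra h'
  push_neg at h'
  rw [stp_eq_zero h h'] at hpos
  norm_num at hpos

/-- Two monotone reparametrizations of the same function are comonotone. -/
lemma comono_comp {X : Type*} (f : X → I) (m m' : I → I)
    (hm : Monotone m) (hm' : Monotone m') :
    Comonotone (fun x => m (f x)) (fun x => m' (f x)) := by
  intro x y
  rcases le_total (f x) (f y) with h | h
  · have h1 : (m (f x) : ℝ) ≤ m (f y) := Subtype.coe_le_coe.2 (hm h)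
    have h2 : (m' (f x) : ℝ) ≤ m' (f y) := Subtype.coe_le_coe.2 (hm' h)
    nlinarith
  · have h1 : (m (f y) : ℝ) ≤ m (f x) := Subtype.coe_le_coe.2 (hm h)
    have h2 : (m' (f y) : ℝ) ≤ m' (f x) := Subtype.coe_le_coe.2 (hm' h)
    nlinarith

/-- If `g = 1` wherever `f > 0`, then `f` and `g` are comonotone. -/
lemma comono_of_steep {X : Type*} (f g : X → I) (h1 : ∀ x, 0 < (f x : ℝ) → g x = 1) :
    Comonotone f g := by
  intro x y
  rcases lt_trichotomy ((f x : ℝ)) ((f y : ℝ)) with h | h | h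
  · have hy : 0 < (f y : ℝ) := lt_of_le_of_lt (f x).2.1 h
    have hgy : (g y : ℝ) = 1 := by rw [h1 y hy]; norm_num
    have hgx : (g x : ℝ) ≤ 1 := (g x).2.2
    nlinarith
  · rw [h]; ring_nf; simp
  · have hx : 0 < (f x : ℝ) := lt_of_le_of_lt (f y).2.1 h
    have hgx : (g x : ℝ) = 1 := by rw [h1 x hx]; norm_num
    have hgy : (g y : ℝ) ≤ 1 := (g y).2.2
    nlinarith

/-- If `g = 1` wherever `f > 0`, then `f ≤ g`. -/
lemma le_of_steep {X : Type*} (f g : X → I) (h1 : ∀ x, 0 < (f x : ℝ) → g x = 1) :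
    ∀ x, f x ≤ g x := by
  intro x
  rcases (f x).2.1.eq_or_lt with h | h
  · rw [← Subtype.coe_le_coe, ← h]
    exact (g x).2.1
  · rw [h1 x h]
    rw [← Subtype.coe_le_coe]
    have := (f x).2.2
    simpa using this

/-- Iterated pointwise max. -/
def env {X : Type*} [TopologicalSpace X] (term : ℕ → C(X, I)) : ℕ → C(X, I)
  | 0 => term 0
  | k + 1 => fSup (env term k) (term (k + 1))

lemma term_le_env {X : Type*} [TopologicalSpace X] (term : ℕ → C(X, I)) :
    ∀ k i, i ≤ k → ∀ x, term i x ≤ env term k x := by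
  intro k
  induction k with
  | zero =>
    intro i hi x
    rw [Nat.le_zero.1 hi]
    exact le_rfl
  | succ k ih =>
    intro i hi x
    rcases eq_or_lt_of_le hi with h | h
    · rw [h]
      exact (le_sup_right : term (k+1) x ≤ env term k x ⊔ term (k+1) x)
    · exact le_trans (ih i (Nat.lt_succ_iff.1 h) x)
        (le_sup_left : env term k x ≤ env term k x ⊔ term (k+1) x)

lemma env_J {X : Type*} [TopologicalSpace X] (J : C(X, I) → I)
    (hmax : ∀ φ ψ : C(X, I), Comonotone (⇑φ) (⇑ψ) → J (fSup φ ψ) = J φ ⊔ J ψ)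
    (ψ : C(X, I)) (m : ℕ → I → I) (hmono : ∀ i, Monotone (m i))
    (term : ℕ → C(X, I)) (hterm : ∀ i x, term i x = m i (ψ x)) :
    ∀ k, (∃ M : I → I, Monotone M ∧ ∀ x, env term k x = M (ψ x)) ∧
      ∀ B : I, (∀ i, i ≤ k → J (term i) ≤ B) → J (env term k) ≤ B := by
  intro k
  induction k with
  | zero =>
    exact ⟨⟨m 0, hmono 0, fun x => hterm 0 x⟩, fun B hB => hB 0 le_rfl⟩
  | succ k ih =>
    obtain ⟨⟨M, hM, hMx⟩, hJb⟩ := ih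
    have hcom : Comonotone (⇑(env term k)) (⇑(term (k + 1))) := by
      intro x y
      have := comono_comp (⇑ψ) M (m (k + 1)) hM (hmono (k + 1)) x y
      simp only at this
      rw [show (env term k) x = M (ψ x) from hMx x,
        show (env term k) y = M (ψ y) from hMx y,
        show (term (k+1)) x = m (k+1) (ψ x) from hterm (k+1) x,
        show (term (k+1)) y = m (k+1) (ψ y) from hterm (k+1) y]
      exact this
    constructor
    · refine ⟨fun s => M s ⊔ m (k + 1) s,
        fun a b hab => sup_le_sup (hM hab) (hmono (k + 1) hab), fun x => ?_⟩
      show env term k x ⊔ term (k + 1) x = _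
      rw [hMx x, hterm (k + 1) x]
    · intro B hB
      have h := hmax (env term k) (term (k + 1)) hcom
      show J (fSup (env term k) (term (k + 1))) ≤ B
      rw [h]
      exact sup_le (hJb B fun i hi => hB i (hi.trans (Nat.le_succ k)))
        (hB (k + 1) le_rfl)

/-- A normed, `∗`-homogeneous and comonotonically maxitive functional on `C(X,[0,1])`
is monotone. -/
theorem normed_homog_comax_is_monotone {X : Type*} [TopologicalSpace X] [CompactSpace X]
    [T2Space X] (T : Tnorm) (J : C(X, I) → I)
    (hone : J (ContinuousMap.const X 1) = 1)
    (hhom : ∀ (c : I) (φ : C(X, I)), J (tMul T c φ) = T.op c (J φ))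
    (hmax : ∀ φ ψ : C(X, I), Comonotone (⇑φ) (⇑ψ) → J (fSup φ ψ) = J φ ⊔ J ψ) :
    ∀ φ ψ : C(X, I), (∀ x, ψ x ≤ φ x) → J ψ ≤ J φ := by
  intro φ ψ hle
  -- Lemma A: comonotone + pointwise ≤ ⟹ J-monotone
  have lemA : ∀ f g : C(X, I), Comonotone (⇑f) (⇑g) → (∀ x, f x ≤ g x) → J f ≤ J g := by
    intro f g hc hle'
    have hfg : fSup f g = g := ContinuousMap.ext fun x => sup_eq_right.2 (hle' x)
    have h2 := hmax f g hc
    rw [hfg] at h2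
    calc J f ≤ J f ⊔ J g := le_sup_left
      _ = J g := h2.symm
  -- T.op with 0
  have op_zero : ∀ c : I, T.op c 0 = 0 := by
    intro c
    refine le_antisymm ?_ ?_
    · calc T.op c 0 ≤ T.op 1 0 := T.mono le_one' le_rfl
        _ = T.op 0 1 := T.comm 1 0
        _ = 0 := T.op_one 0
    · rw [← Subtype.coe_le_coe]
      exact (T.op c 0).2.1
  have op_le_left : ∀ c s : I, T.op c s ≤ c := by
    intro c s
    calc T.op c s ≤ T.op c 1 := T.mono le_rfl le_one'
      _ = c := T.op_one c
  rw [← Subtype.coe_le_coe]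
  refine le_of_forall_pos_le_add ?_
  intro ε hε
  -- uniform continuity of the t-norm
  have UC : UniformContinuous (fun p : I × I => T.op p.1 p.2) :=
    CompactSpace.uniformContinuous_of_continuous T.cont
  obtain ⟨δ, hδpos, hδ⟩ := Metric.uniformContinuous_iff.mp UC ε hε
  obtain ⟨n, hn⟩ := exists_nat_gt (3 / δ)
  have hn0 : (0 : ℝ) < n := lt_trans (by positivity) hn
  have h3n : 3 / (n : ℝ) < δ := by
    rw [div_lt_iff₀ hn0]
    rw [div_lt_iff₀ hδpos] at hn
    nlinarith
  -- grid levels and steep value-maps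
  set t : ℕ → I := fun i => Set.projIcc 0 1 zero_le_one ((i : ℝ) / n) with ht
  set c : ℕ → I := fun i => Set.projIcc 0 1 zero_le_one (((i : ℝ) - 3) / n) with hc
  have hpq1 : ∀ i : ℕ, ((i : ℝ) - 2) / n < ((i : ℝ) - 1) / n :=
    fun i => by rw [div_lt_div_iff₀ hn0 hn0]; nlinarith
  have hpq2 : ∀ i : ℕ, ((i : ℝ) - 3) / n < ((i : ℝ) - 2) / n :=
    fun i => by rw [div_lt_div_iff₀ hn0 hn0]; nlinarith
  set u : ℕ → I → I := fun i => stp (((i : ℝ) - 2) / n) (((i : ℝ) - 1) / n) with hu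
  set v : ℕ → I → I := fun i => stp (((i : ℝ) - 3) / n) (((i : ℝ) - 2) / n) with hv
  let χ : ℕ → C(X, I) := fun i => ⟨fun x => u i (ψ x), (stp_cont _ _).comp ψ.continuous⟩
  let χ' : ℕ → C(X, I) := fun i => ⟨fun x => v i (φ x), (stp_cont _ _).comp φ.continuous⟩
  have htco : ∀ i : ℕ, i ≤ n → ((t i : ℝ)) = (i : ℝ) / n := by
    intro i hi
    have hmem : (i : ℝ) / n ∈ Set.Icc (0 : ℝ) 1 :=
      ⟨by positivity, by rw [div_le_one hn0]; exact_mod_cast hi⟩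
    show (Set.projIcc 0 1 zero_le_one ((i : ℝ) / n) : ℝ) = (i : ℝ) / n
    rw [Set.projIcc_of_mem _ hmem]
  have hcco : ∀ i : ℕ, ((c i : ℝ)) = max 0 (min 1 (((i : ℝ) - 3) / n)) := by
    intro i
    rw [hc]
    rw [Set.coe_projIcc]
  -- steep comparison of the level functions of ψ and φ
  have hsteep : ∀ i : ℕ, ∀ x, 0 < ((χ i x : ℝ)) → χ' i x = 1 := by
    intro i x hx
    have h1 : ((i : ℝ) - 2) / n < (ψ x : ℝ) := stp_pos (hpq1 i) hx
    have h2 : ((i : ℝ) - 2) / n ≤ (φ x : ℝ) := le_trans h1.le (Subtype.coe_le_coe.2 (hle x))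
    exact stp_eq_one (hpq2 i) h2
  have hχ : ∀ i, J (χ i) ≤ J (χ' i) := fun i =>
    lemA _ _ (comono_of_steep _ _ (hsteep i)) (le_of_steep _ _ (hsteep i))
  -- lower bound on J φ from the level functions of φ
  have hφlb : ∀ i : ℕ, T.op (c i) (J (χ' i)) ≤ J φ := by
    intro i
    have hcomo : Comonotone (⇑(tMul T (c i) (χ' i))) (⇑φ) := by
      intro x y
      have := comono_comp (⇑φ) (fun s => T.op (c i) (v i s)) id
        (fun a b hab => T.mono le_rfl (stp_mono (hpq2 i) hab)) monotone_id x y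
      exact this
    have hlee : ∀ x, tMul T (c i) (χ' i) x ≤ φ x := by
      intro x
      rcases ((χ' i x).2.1).eq_or_lt with h | h
      · have h0 : χ' i x = 0 := Subtype.ext h.symm
        show T.op (c i) (χ' i x) ≤ φ x
        rw [h0, op_zero]
        rw [← Subtype.coe_le_coe]
        exact (φ x).2.1
      · have h1 : ((i : ℝ) - 3) / n < (φ x : ℝ) := stp_pos (hpq2 i) h
        show T.op (c i) (χ' i x) ≤ φ x
        refine le_trans (op_le_left _ _) ?_
        rw [← Subtype.coe_le_coe, hcco i]
        exact max_le (φ x).2.1 (le_trans (min_le_right _ _) h1.le)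
    have hres := lemA _ _ hcomo hlee
    rwa [hhom] at hres
  -- t i and c i are uniformly close
  have hnear : ∀ i : ℕ, i ≤ n →
      ((T.op (t i) (J (χ' i)) : ℝ)) ≤ (T.op (c i) (J (χ' i)) : ℝ) + ε := by
    intro i hi
    have hcast : (i : ℝ) ≤ n := Nat.cast_le.2 hi
    have hdist : dist (t i) (c i) < δ := by
      rw [Subtype.dist_eq, Real.dist_eq, htco i hi, hcco i]
      have hmin : min 1 (((i : ℝ) - 3) / n) = ((i : ℝ) - 3) / n :=
        min_eq_right (by rw [div_le_one hn0]; linarith)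
      rcases le_or_gt 0 (((i : ℝ) - 3) / n) with hge | hlt
      · rw [hmin, max_eq_right hge]
        have heq : (i : ℝ) / n - ((i : ℝ) - 3) / n = 3 / n := by
          rw [div_sub_div_same]; norm_num
        rw [heq, abs_of_nonneg (by positivity)]
        exact h3n
      · rw [hmin, max_eq_left hlt.le, sub_zero, abs_of_nonneg (by positivity)]
        have hi3 : (i : ℝ) < 3 := by
          by_contra h'
          push_neg at h'
          have : 0 ≤ ((i : ℝ) - 3) / n := div_nonneg (by linarith) hn0.le
          linarith
        calc (i : ℝ) / n < 3 / n := by rw [div_lt_div_iff₀ hn0 hn0]; nlinarith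
          _ < δ := h3n
    have hs := hδ (a := (t i, J (χ' i))) (b := (c i, J (χ' i))) (by
      rw [Prod.dist_eq]
      simp only [dist_self]
      rw [max_eq_left dist_nonneg]
      exact hdist)
    rw [Subtype.dist_eq, Real.dist_eq] at hs
    have := abs_lt.1 hs
    linarith [this.2]
  -- the envelope of ψ
  set m : ℕ → I → I := fun i s => T.op (t i) (u i s) with hm
  set term : ℕ → C(X, I) := fun i => tMul T (t i) (χ i) with hterm0
  have hmono : ∀ i, Monotone (m i) := fun i a b hab => T.mono le_rfl (stp_mono (hpq1 i) hab)
  have hterm : ∀ i x, term i x = m i (ψ x) := fun i x => rfl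
  obtain ⟨⟨M, hM, hMx⟩, hJB⟩ := env_J J hmax ψ m hmono term hterm n
  have hψE : ∀ x, ψ x ≤ env term n x := by
    intro x
    rcases ((ψ x).2.1).eq_or_lt with h0 | h0
    · rw [← Subtype.coe_le_coe, ← h0]
      exact (env term n x).2.1
    · have hsn : 0 < (ψ x : ℝ) * n := mul_pos h0 hn0
      set i : ℕ := ⌈(ψ x : ℝ) * n⌉₊ with hi
      have hin : i ≤ n := Nat.ceil_le.2 (by nlinarith [(ψ x).2.2])
      have hceil1 : (i : ℝ) < (ψ x : ℝ) * n + 1 := Nat.ceil_lt_add_one hsn.le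
      have hle2 : (ψ x : ℝ) * n ≤ i := Nat.le_ceil _
      have hu1 : u i (ψ x) = 1 :=
        stp_eq_one (hpq1 i) (by rw [div_le_iff₀ hn0]; linarith)
      have hterm_ge : ψ x ≤ term i x := by
        show ψ x ≤ T.op (t i) (χ i x)
        rw [show (χ i) x = u i (ψ x) from rfl, hu1, T.op_one]
        rw [← Subtype.coe_le_coe, htco i hin]
        rw [le_div_iff₀ hn0]
        exact hle2
      exact le_trans hterm_ge (term_le_env term n i hin x)
  have hcomψE : Comonotone (⇑ψ) (⇑(env term n)) := by
    intro x y
    have hcc := comono_comp (⇑ψ) id M monotone_id hM x y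
    simp only [id] at hcc
    rw [show (env term n) x = M (ψ x) from hMx x, show (env term n) y = M (ψ y) from hMx y]
    exact hcc
  set B : I := Set.projIcc 0 1 zero_le_one ((J φ : ℝ) + ε) with hB
  have hBcoe : (B : ℝ) = max 0 (min 1 ((J φ : ℝ) + ε)) := by
    rw [hB, Set.coe_projIcc]
  have hB' : ∀ i, i ≤ n → J (term i) ≤ B := by
    intro i hi
    have hJt : J (term i) = T.op (t i) (J (χ i)) := hhom (t i) (χ i)
    rw [hJt, ← Subtype.coe_le_coe, hBcoe]
    have h1 : ((T.op (t i) (J (χ i)) : ℝ)) ≤ T.op (t i) (J (χ' i)) :=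
      Subtype.coe_le_coe.2 (T.mono le_rfl (hχ i))
    have h2 := hnear i hi
    have h3 : ((T.op (c i) (J (χ' i)) : ℝ)) ≤ J φ := Subtype.coe_le_coe.2 (hφlb i)
    have h4 : ((T.op (t i) (J (χ i)) : ℝ)) ≤ 1 := (T.op (t i) (J (χ i))).2.2
    exact le_max_of_le_right (le_min h4 (by linarith))
  have hfinal : J ψ ≤ B := le_trans (lemA ψ (env term n) hcomψE hψE) (hJB B hB')
  have hfc := Subtype.coe_le_coe.2 hfinal
  rw [hBcoe] at hfc
  refine le_trans hfc (max_le ?_ (min_le_right _ _))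
  have := (J φ).2.1
  linarith
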